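/- For every {0,…,T}-valued stopping time σ of the natural filtration of X and every {0,…,T}-valued stopping time τ of the natural filtration of Y, the function s ↦ F^τ_σ(s) := E^λ_y[|X_{σ ∧ (T − τ∧s)} − Y_{τ∧s}|], s ∈ {0,…,T}, is nondecreasing. -/

import Mathlib

open MeasureTheory ProbabilityTheory

noncomputable section

namespace SwitchingIdentities

variable {Ω : Type*} [MeasurableSpace Ω]

/-- The increment `ξ` has the fair `±1` law. -/
def FairSign (P : Measure Ω) (ξ : Ω → ℤ) : Prop :=
  P {ω | ξ ω = 1} = 1 / 2 ∧ P {ω | ξ ω = -1} = 1 / 2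

/-- `ξ` and `η` are the increment families of two independent simple symmetric random
walks on `ℤ`: all increments are measurable, fair `±1` coins, and the whole family
`(ξ₀, ξ₁, …, η₀, η₁, …)` is independent. -/
def IndepSSRWIncrements (P : Measure Ω) (ξ η : ℕ → Ω → ℤ) : Prop :=
  (∀ n, Measurable (ξ n)) ∧ (∀ n, Measurable (η n)) ∧
  (∀ n, FairSign P (ξ n)) ∧ (∀ n, FairSign P (η n)) ∧
  iIndepFun (Sum.elim ξ η) P

/-- The random walk with increments `ξ` started at `x`. -/
def walk (ξ : ℕ → Ω → ℤ) (x : ℤ) (t : ℕ) (ω : Ω) : ℤ :=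
  x + ∑ i ∈ Finset.range t, ξ i ω

/-- A Root continuation set: if `(t,m) ∈ D` then `(s,m) ∈ D` for all `s < t`. -/
def IsRootCont {α : Type*} (D : Set (ℕ × α)) : Prop :=
  ∀ t m, (t, m) ∈ D → ∀ s, s < t → (s, m) ∈ D

/-- A Rost continuation set: if `(t,m) ∈ D` then `(s,m) ∈ D` for all `s > t`. -/
def IsRostCont {α : Type*} (D : Set (ℕ × α)) : Prop :=
  ∀ t m, (t, m) ∈ D → ∀ s, t < s → (s, m) ∈ D

/-- `hit D Z ω = inf {t : (t, Z_t) ∉ D}` (junk value `0` if the walk never leaves `D`). -/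
def hit {α : Type*} (D : Set (ℕ × α)) (Z : ℕ → Ω → α) (ω : Ω) : ℕ :=
  sInf {t | (t, Z t ω) ∉ D}

/-- `hitBy D Z n ω = inf {t : (t, Z_t) ∉ D} ∧ n` (equal to `n` if the walk never leaves `D`). -/
def hitBy {α : Type*} (D : Set (ℕ × α)) (Z : ℕ → Ω → α) (n : ℕ) (ω : Ω) : ℕ :=
  sInf ({t | (t, Z t ω) ∉ D} ∪ {n})

/-- `revHitBy D Z T ω = inf {t : (T − t, Z_t) ∉ D} ∧ T`, the exit time of the time-reversed
space-time walk, capped at `T`. -/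
def revHitBy {α : Type*} (D : Set (ℕ × α)) (Z : ℕ → Ω → α) (T : ℕ) (ω : Ω) : ℕ :=
  sInf ({t | (T - t, Z t ω) ∉ D} ∪ {T})

/-- The potential function `U_m(z) = −∑_x |z − x| m({x})` of a measure `m` on `ℤ`. -/
def potential (m : Measure ℤ) (z : ℤ) : ℝ :=
  -∑' w : ℤ, (|z - w| : ℤ) * (m {w}).toReal

/-- A measure on `ℤ` has a finite first moment. -/
def FiniteFirstMoment (m : Measure ℤ) : Prop :=
  Integrable (fun z : ℤ => (z : ℝ)) m

/-- `τ` is a stopping time of the natural filtration of the process `Z`: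
`{τ ≤ n} ∈ σ(Z_0, …, Z_n)` for every `n`. -/
def IsNatStopping {α : Type*} [MeasurableSpace α] (Z : ℕ → Ω → α) (τ : Ω → ℕ) : Prop :=
  ∀ n : ℕ,
    MeasurableSet[MeasurableSpace.comap (fun ω => (fun i : Fin (n + 1) => Z i ω)) inferInstance]
      {ω | τ ω ≤ n}

/-- The law `μ^{Root}` of `X_{ρ^{Root}}` where `X` has increments `ξ` and `X_0 ∼ λ`. -/
def muRoot (P : Measure Ω) (ξ : ℕ → Ω → ℤ) (D : Set (ℕ × ℤ)) (lam : Measure ℤ) : Measure ℤ :=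
  Measure.map (fun p : ℤ × Ω => walk ξ p.1 (hit D (walk ξ p.1) p.2) p.2) (lam.prod P)

/-- The law `μ^{Root}_T` of `X_{ρ^{Root} ∧ T}` where `X` has increments `ξ` and `X_0 ∼ λ`. -/
def muRootT (P : Measure Ω) (ξ : ℕ → Ω → ℤ) (D : Set (ℕ × ℤ)) (lam : Measure ℤ) (T : ℕ) :
    Measure ℤ :=
  Measure.map (fun p : ℤ × Ω => walk ξ p.1 (hitBy D (walk ξ p.1) T p.2) p.2) (lam.prod P)


section Helpers

lemma walk_succ' {Ω' : Type*} (ξ : ℕ → Ω' → ℤ) (x : ℤ) (t : ℕ) (ω : Ω') :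
    walk ξ x (t + 1) ω = walk ξ x t ω + ξ t ω := by
  simp [walk, Finset.sum_range_succ, add_assoc]

lemma walk_min' {Ω' : Type*} (ξ : ℕ → Ω' → ℤ) (x : ℤ) (m t : ℕ) (ω : Ω') :
    walk ξ x (min m t) ω = x + ∑ i ∈ Finset.range t, if i < m then ξ i ω else 0 := by
  have h : Finset.range (min m t) = (Finset.range t).filter (fun i => i < m) := by
    ext i; simp [Finset.mem_filter]; omega
  show x + ∑ i ∈ Finset.range (min m t), ξ i ω = _
  rw [h, Finset.sum_filter]

lemma walk_min_succ' {Ω' : Type*} (ξ : ℕ → Ω' → ℤ) (x : ℤ) (m t : ℕ) (ω : Ω') :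
    walk ξ x (min m (t + 1)) ω = walk ξ x (min m t) ω + (if t < m then ξ t ω else 0) := by
  by_cases h : t < m
  · rw [if_pos h, min_eq_right (by omega : t + 1 ≤ m), min_eq_right (by omega : t ≤ m)]
    exact walk_succ' ξ x t ω
  · rw [if_neg h, min_eq_left (by omega : m ≤ t + 1), min_eq_left (by omega : m ≤ t), add_zero]

lemma walk_abs_le' {Ω' : Type*} (ξ : ℕ → Ω' → ℤ) (x : ℤ) (t : ℕ) (ω : Ω')
    (hb : ∀ j, j < t → |ξ j ω| ≤ 1) : |walk ξ x t ω| ≤ |x| + t := by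
  have h1 : |∑ i ∈ Finset.range t, ξ i ω| ≤ ∑ i ∈ Finset.range t, |ξ i ω| :=
    Finset.abs_sum_le_sum_abs _ _
  have h2 : ∑ i ∈ Finset.range t, |ξ i ω| ≤ ∑ _i ∈ Finset.range t, (1 : ℤ) :=
    Finset.sum_le_sum fun i hi => hb i (Finset.mem_range.1 hi)
  have h3 : ∑ _i ∈ Finset.range t, (1 : ℤ) = t := by simp
  calc |walk ξ x t ω| = |x + ∑ i ∈ Finset.range t, ξ i ω| := rfl
    _ ≤ |x| + |∑ i ∈ Finset.range t, ξ i ω| := abs_add_le _ _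
    _ ≤ |x| + t := by omega

end Helpers

lemma indep_integral_mul {Ω' : Type*} {mΩ : MeasurableSpace Ω'}
    (P : Measure Ω') [IsProbabilityMeasure P]
    (M : {m : MeasurableSpace Ω' // m ≤ mΩ})
    (w : Ω' → ℤ) (hwm : Measurable[mΩ] w)
    (hI : Indep M.1 (MeasurableSpace.comap w inferInstance) P)
    (X : Ω' → ℝ) (hXm : Measurable[M.1] X) (hXi : Integrable X P) (e₀ : ℤ) :
    ∫ ω, X ω * ({ω' | w ω' = e₀}.indicator 1 ω) ∂P
      = (∫ ω, X ω ∂P) * (P {ω' | w ω' = e₀}).toReal := by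
  have hsetc : MeasurableSet[MeasurableSpace.comap w inferInstance] {ω' | w ω' = e₀} :=
    ⟨{e₀}, measurableSet_singleton e₀, rfl⟩
  have hset : MeasurableSet[mΩ] {ω' | w ω' = e₀} := hwm (measurableSet_singleton e₀)
  have hY : Measurable[MeasurableSpace.comap w inferInstance]
      ({ω' | w ω' = e₀}.indicator (1 : Ω' → ℝ)) :=
    measurable_const.indicator hsetc
  have hXY : IndepFun X ({ω' | w ω' = e₀}.indicator (1 : Ω' → ℝ)) P :=
    indep_of_indep_of_le_left (indep_of_indep_of_le_right hI (measurable_iff_comap_le.1 hY))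
      (measurable_iff_comap_le.1 hXm)
  have hYi : Integrable ({ω' | w ω' = e₀}.indicator (1 : Ω' → ℝ)) P :=
    Integrable.indicator (μ := P) (integrable_const (1 : ℝ)) hset
  calc ∫ ω, X ω * ({ω' | w ω' = e₀}.indicator 1 ω) ∂P
      = (∫ ω, X ω ∂P) * ∫ ω, ({ω' | w ω' = e₀}.indicator (1 : Ω' → ℝ)) ω ∂P := by
        have := hXY.integral_mul_eq_mul_integral hXi.aestronglyMeasurable hYi.aestronglyMeasurable
        simpa [Pi.mul_apply] using this
    _ = (∫ ω, X ω ∂P) * (P {ω' | w ω' = e₀}).toReal := by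
        rw [integral_indicator_one (μ := P) hset, measureReal_def]


lemma ae_sign {Ω' : Type*} {mΩ : MeasurableSpace Ω'} (P : Measure Ω') [IsProbabilityMeasure P]
    (u : Ω' → ℤ) (hum : Measurable[mΩ] u) (hu : FairSign P u) :
    ∀ᵐ ω ∂P, u ω = 1 ∨ u ω = -1 := by
  have hA : MeasurableSet[mΩ] {ω | u ω = 1} := hum (measurableSet_singleton 1)
  have hB : MeasurableSet[mΩ] {ω | u ω = -1} := hum (measurableSet_singleton (-1))
  have hd : Disjoint {ω | u ω = 1} {ω | u ω = -1} := by
    rw [Set.disjoint_left]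
    intro ω h1 h2
    simp only [Set.mem_setOf_eq] at h1 h2
    omega
  have hun : P ({ω | u ω = 1} ∪ {ω | u ω = -1}) = 1 := by
    rw [measure_union hd hB, hu.1, hu.2, ENNReal.add_halves]
  have hc : P ({ω | u ω = 1} ∪ {ω | u ω = -1})ᶜ = 0 := by
    rw [prob_compl_eq_zero_iff (hA.union hB)]
    exact hun
  rw [ae_iff]
  have heq : {ω | ¬(u ω = 1 ∨ u ω = -1)} = ({ω | u ω = 1} ∪ {ω | u ω = -1})ᶜ := by
    ext ω; simp [not_or]
  rw [heq]; exact hc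


lemma key_nonneg {Ω' : Type*} {mΩ : MeasurableSpace Ω'}
    (P : Measure Ω') [IsProbabilityMeasure P]
    (M : {m : MeasurableSpace Ω' // m ≤ mΩ})
    (u v : Ω' → ℤ) (hum : Measurable[mΩ] u) (hvm : Measurable[mΩ] v)
    (hu : FairSign P u) (hv : FairSign P v)
    (hIu : Indep M.1 (MeasurableSpace.comap u inferInstance) P)
    (hIv : Indep M.1 (MeasurableSpace.comap v inferInstance) P)
    (a : Ω' → ℤ) (ham : Measurable[M.1] a)
    (C : ℝ) (hab : ∀ᵐ ω ∂P, ((|a ω| : ℤ) : ℝ) ≤ C)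
    (eS cS : Set Ω') (heM : MeasurableSet[M.1] eS) (hcM : MeasurableSet[M.1] cS) :
    0 ≤ ∫ ω, eS.indicator (fun ω' => ((|a ω' - v ω'| : ℤ) : ℝ)
        - ((|a ω' + cS.indicator u ω'| : ℤ) : ℝ)) ω ∂P := by
  have hMle : M.1 ≤ mΩ := M.2
  set f : ℤ → Ω' → ℝ := fun k ω => ((|a ω + k| : ℤ) : ℝ) with hf
  set χ : Set Ω' → Ω' → ℝ := fun S => S.indicator 1 with hχ
  -- measurability of building blocks
  have hfm : ∀ k : ℤ, Measurable[M.1] (f k) := by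
    intro k
    exact (Measurable.of_discrete (f := fun z : ℤ => ((|z + k| : ℤ) : ℝ))).comp ham
  have hXm : ∀ (S : Set Ω') (k : ℤ), MeasurableSet[M.1] S → Measurable[M.1] (fun ω => χ S ω * f k ω) := by
    intro S k hS
    exact (measurable_const.indicator hS).mul (hfm k)
  -- integrability
  have hXi : ∀ (S : Set Ω') (k : ℤ), MeasurableSet[M.1] S → |k| ≤ 1 →
      Integrable (fun ω => χ S ω * f k ω) P := by
    intro S k hS hk
    refine Integrable.mono' (integrable_const (μ := P) (C + 1))
      (((hXm S k hS).mono hMle le_rfl).aestronglyMeasurable) ?_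
    filter_upwards [hab] with ω hω
    have h1 : |χ S ω| ≤ 1 := by
      simp only [hχ, Set.indicator]
      split <;> simp
    have h2 : |f k ω| ≤ C + 1 := by
      have h3 : (|a ω + k| : ℤ) ≤ |a ω| + 1 := le_trans (abs_add_le _ _) (by omega)
      have h4 : ((|a ω + k| : ℤ) : ℝ) ≤ ((|a ω| : ℤ) : ℝ) + 1 := by exact_mod_cast h3
      rw [hf, abs_of_nonneg (by positivity)]
      linarith
    calc |χ S ω * f k ω| = |χ S ω| * |f k ω| := abs_mul _ _
      _ ≤ 1 * (C + 1) := by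
          apply mul_le_mul h1 h2 (abs_nonneg _) zero_le_one
      _ = C + 1 := one_mul _
  -- ae sign facts
  have hu1 := ae_sign P u hum hu
  have hv1 := ae_sign P v hvm hv
  have hE2 : MeasurableSet[M.1] (eS ∩ cS) := heM.inter hcM
  have hE3 : MeasurableSet[M.1] (eS \ cS) := heM.diff hcM
  -- the five terms
  set t1 : Ω' → ℝ := fun ω => (χ eS ω * f (-1) ω) * ({ω' | v ω' = 1}.indicator 1 ω) with ht1
  set t2 : Ω' → ℝ := fun ω => (χ eS ω * f 1 ω) * ({ω' | v ω' = -1}.indicator 1 ω) with ht2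
  set t3 : Ω' → ℝ := fun ω => (χ (eS ∩ cS) ω * f 1 ω) * ({ω' | u ω' = 1}.indicator 1 ω) with ht3
  set t4 : Ω' → ℝ := fun ω => (χ (eS ∩ cS) ω * f (-1) ω) * ({ω' | u ω' = -1}.indicator 1 ω) with ht4
  set t5 : Ω' → ℝ := fun ω => χ (eS \ cS) ω * f 0 ω with ht5
  -- pointwise decomposition
  have hdec : (fun ω => eS.indicator (fun ω' => ((|a ω' - v ω'| : ℤ) : ℝ)
        - ((|a ω' + cS.indicator u ω'| : ℤ) : ℝ)) ω)
      =ᵐ[P] fun ω => t1 ω + t2 ω - t3 ω - t4 ω - t5 ω := by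
    filter_upwards [hu1, hv1] with ω huω hvω
    by_cases he : ω ∈ eS
    · by_cases hc : ω ∈ cS
      · have he2 : ω ∈ eS ∩ cS := ⟨he, hc⟩
        have he3 : ω ∉ eS \ cS := fun hx => hx.2 hc
        rcases hvω with h1 | h1 <;> rcases huω with h2 | h2 <;>
          simp [ht1, ht2, ht3, ht4, ht5, hχ, hf, Set.indicator_apply, Set.mem_setOf_eq,
            he, hc, he2, he3, h1, h2, sub_eq_add_neg]
      · have he2 : ω ∉ eS ∩ cS := fun hx => hc hx.2
        have he3 : ω ∈ eS \ cS := ⟨he, hc⟩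
        rcases hvω with h1 | h1 <;>
          simp [ht1, ht2, ht3, ht4, ht5, hχ, hf, Set.indicator_apply, Set.mem_setOf_eq,
            he, hc, he2, he3, h1, sub_eq_add_neg]
    · have he2 : ω ∉ eS ∩ cS := fun hx => he hx.1
      have he3 : ω ∉ eS \ cS := fun hx => he hx.1
      simp [ht1, ht2, ht3, ht4, ht5, hχ, hf, Set.indicator_apply, Set.mem_setOf_eq,
        he, he2, he3]
  -- integrability of the terms
  have hind : ∀ (w' : Ω' → ℤ), Measurable[mΩ] w' → ∀ e₀ : ℤ,
      Measurable[mΩ] (fun ω => ({ω' | w' ω' = e₀}.indicator (1 : Ω' → ℝ) ω)) := by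
    intro w' hw' e₀
    exact measurable_const.indicator (hw' (measurableSet_singleton e₀))
  have hprod : ∀ (S : Set Ω') (k : ℤ) (w' : Ω' → ℤ) (e₀ : ℤ), MeasurableSet[M.1] S → |k| ≤ 1 →
      Measurable[mΩ] w' →
      Integrable (fun ω => (χ S ω * f k ω) * ({ω' | w' ω' = e₀}.indicator 1 ω)) P := by
    intro S k w' e₀ hS hk hw'
    refine Integrable.mono' ((hXi S k hS hk).abs)
      ((((hXm S k hS).mono hMle le_rfl).mul (hind w' hw' e₀)).aestronglyMeasurable) ?_
    filter_upwards with ω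
    have h1 : |({ω' | w' ω' = e₀}.indicator (1 : Ω' → ℝ) ω)| ≤ 1 := by
      simp only [Set.indicator_apply]
      split <;> simp
    calc |χ S ω * f k ω * ({ω' | w' ω' = e₀}.indicator 1 ω)|
        = |χ S ω * f k ω| * |({ω' | w' ω' = e₀}.indicator (1 : Ω' → ℝ) ω)| := abs_mul _ _
      _ ≤ |χ S ω * f k ω| * 1 := by
          exact mul_le_mul_of_nonneg_left h1 (abs_nonneg _)
      _ = |(fun ω => χ S ω * f k ω) ω| := by simp
  have hi1 : Integrable t1 P := hprod eS (-1) v 1 heM (by norm_num) hvm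
  have hi2 : Integrable t2 P := hprod eS 1 v (-1) heM (by norm_num) hvm
  have hi3 : Integrable t3 P := hprod (eS ∩ cS) 1 u 1 hE2 (by norm_num) hum
  have hi4 : Integrable t4 P := hprod (eS ∩ cS) (-1) u (-1) hE2 (by norm_num) hum
  have hi5 : Integrable t5 P := hXi (eS \ cS) 0 hE3 (by norm_num)
  rw [integral_congr_ae hdec]
  -- split the integral of the five-term sum
  have E2' : ∫ ω, (t1 ω + t2 ω) ∂P = (∫ ω, t1 ω ∂P) + ∫ ω, t2 ω ∂P := integral_add hi1 hi2
  have E3' : ∫ ω, (t1 ω + t2 ω - t3 ω) ∂P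
      = (∫ ω, (t1 ω + t2 ω) ∂P) - ∫ ω, t3 ω ∂P := integral_sub (hi1.add hi2) hi3
  have E4' : ∫ ω, (t1 ω + t2 ω - t3 ω - t4 ω) ∂P
      = (∫ ω, (t1 ω + t2 ω - t3 ω) ∂P) - ∫ ω, t4 ω ∂P :=
    integral_sub ((hi1.add hi2).sub hi3) hi4
  have E5' : ∫ ω, (t1 ω + t2 ω - t3 ω - t4 ω - t5 ω) ∂P
      = (∫ ω, (t1 ω + t2 ω - t3 ω - t4 ω) ∂P) - ∫ ω, t5 ω ∂P :=
    integral_sub (((hi1.add hi2).sub hi3).sub hi4) hi5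
  -- product formulas
  have hhalf : ((1 : ENNReal)/2).toReal = (2 : ℝ)⁻¹ := by
    rw [ENNReal.toReal_div]; norm_num
  have e1 : ∫ ω, t1 ω ∂P = (∫ ω, χ eS ω * f (-1) ω ∂P) * 2⁻¹ := by
    have h := indep_integral_mul P M v hvm hIv (fun ω => χ eS ω * f (-1) ω)
      (hXm eS (-1) heM) (hXi eS (-1) heM (by norm_num)) 1
    rw [show ∫ ω, t1 ω ∂P = ∫ ω, (χ eS ω * f (-1) ω) * ({ω' | v ω' = 1}.indicator 1 ω) ∂P
      from by simp only [ht1], h, hv.1, hhalf]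
  have e2 : ∫ ω, t2 ω ∂P = (∫ ω, χ eS ω * f 1 ω ∂P) * 2⁻¹ := by
    have h := indep_integral_mul P M v hvm hIv (fun ω => χ eS ω * f 1 ω)
      (hXm eS 1 heM) (hXi eS 1 heM (by norm_num)) (-1)
    rw [show ∫ ω, t2 ω ∂P = ∫ ω, (χ eS ω * f 1 ω) * ({ω' | v ω' = -1}.indicator 1 ω) ∂P
      from by simp only [ht2], h, hv.2, hhalf]
  have e3 : ∫ ω, t3 ω ∂P = (∫ ω, χ (eS ∩ cS) ω * f 1 ω ∂P) * 2⁻¹ := by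
    have h := indep_integral_mul P M u hum hIu (fun ω => χ (eS ∩ cS) ω * f 1 ω)
      (hXm (eS ∩ cS) 1 hE2) (hXi (eS ∩ cS) 1 hE2 (by norm_num)) 1
    rw [show ∫ ω, t3 ω ∂P = ∫ ω, (χ (eS ∩ cS) ω * f 1 ω) * ({ω' | u ω' = 1}.indicator 1 ω) ∂P
      from by simp only [ht3], h, hu.1, hhalf]
  have e4 : ∫ ω, t4 ω ∂P = (∫ ω, χ (eS ∩ cS) ω * f (-1) ω ∂P) * 2⁻¹ := by
    have h := indep_integral_mul P M u hum hIu (fun ω => χ (eS ∩ cS) ω * f (-1) ω)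
      (hXm (eS ∩ cS) (-1) hE2) (hXi (eS ∩ cS) (-1) hE2 (by norm_num)) (-1)
    rw [show ∫ ω, t4 ω ∂P = ∫ ω, (χ (eS ∩ cS) ω * f (-1) ω) * ({ω' | u ω' = -1}.indicator 1 ω) ∂P
      from by simp only [ht4], h, hu.2, hhalf]
  have e5 : ∫ ω, t5 ω ∂P = ∫ ω, χ (eS \ cS) ω * f 0 ω ∂P := by simp only [ht5]
  -- split the eS integrals over cS
  have hsplit : ∀ k : ℤ, |k| ≤ 1 → ∫ ω, χ eS ω * f k ω ∂P
      = (∫ ω, χ (eS ∩ cS) ω * f k ω ∂P) + ∫ ω, χ (eS \ cS) ω * f k ω ∂P := by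
    intro k hk
    rw [← integral_add (hXi (eS ∩ cS) k hE2 hk) (hXi (eS \ cS) k hE3 hk)]
    apply integral_congr_ae
    filter_upwards with ω
    by_cases he : ω ∈ eS <;> by_cases hc : ω ∈ cS <;>
      simp [hχ, Set.indicator_apply, Set.mem_inter_iff, Set.mem_diff, he, hc]
  -- the remaining nonnegative integral
  have G3 : ∀ k : ℤ, |k| ≤ 1 → ∫ ω, (χ (eS \ cS) ω * f k ω * 2⁻¹) ∂P
      = (∫ ω, χ (eS \ cS) ω * f k ω ∂P) * 2⁻¹ := fun k hk => integral_mul_const _ _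
  have G2 : ∫ ω, (χ (eS \ cS) ω * f (-1) ω * 2⁻¹ + χ (eS \ cS) ω * f 1 ω * 2⁻¹) ∂P
      = (∫ ω, (χ (eS \ cS) ω * f (-1) ω * 2⁻¹) ∂P) + ∫ ω, (χ (eS \ cS) ω * f 1 ω * 2⁻¹) ∂P :=
    integral_add ((hXi (eS \ cS) (-1) hE3 (by norm_num)).mul_const _)
      ((hXi (eS \ cS) 1 hE3 (by norm_num)).mul_const _)
  have G1 : ∫ ω, (χ (eS \ cS) ω * f (-1) ω * 2⁻¹ + χ (eS \ cS) ω * f 1 ω * 2⁻¹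
        - χ (eS \ cS) ω * f 0 ω) ∂P
      = (∫ ω, (χ (eS \ cS) ω * f (-1) ω * 2⁻¹ + χ (eS \ cS) ω * f 1 ω * 2⁻¹) ∂P)
        - ∫ ω, χ (eS \ cS) ω * f 0 ω ∂P :=
    integral_sub (((hXi (eS \ cS) (-1) hE3 (by norm_num)).mul_const _).add
      ((hXi (eS \ cS) 1 hE3 (by norm_num)).mul_const _)) (hXi (eS \ cS) 0 hE3 (by norm_num))
  have hnn : 0 ≤ ∫ ω, (χ (eS \ cS) ω * f (-1) ω * 2⁻¹ + χ (eS \ cS) ω * f 1 ω * 2⁻¹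
      - χ (eS \ cS) ω * f 0 ω) ∂P := by
    apply integral_nonneg
    intro ω
    simp only [Pi.zero_apply]
    by_cases he : ω ∈ eS \ cS
    · have hχ1 : χ (eS \ cS) ω = 1 := by simp [hχ, Set.indicator_apply, he]
      simp only [hχ1, one_mul]
      have habs : (2 : ℤ) * |a ω| ≤ |a ω + (-1)| + |a ω + 1| := by
        have h1 : a ω + (-1) + (a ω + 1) = 2 * a ω := by ring
        have h2 : |(2 : ℤ) * a ω| = 2 * |a ω| := by
          rw [abs_mul]; norm_num
        calc (2 : ℤ) * |a ω| = |2 * a ω| := h2.symm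
          _ = |a ω + (-1) + (a ω + 1)| := by rw [h1]
          _ ≤ |a ω + (-1)| + |a ω + 1| := abs_add_le _ _
      have hcast : ((2 : ℝ)) * ((|a ω| : ℤ) : ℝ)
          ≤ ((|a ω + (-1)| : ℤ) : ℝ) + ((|a ω + 1| : ℤ) : ℝ) := by exact_mod_cast habs
      simp only [hf]
      have h0 : ((|a ω + 0| : ℤ) : ℝ) = ((|a ω| : ℤ) : ℝ) := by norm_num
      rw [h0]
      linarith
    · have hχ0 : χ (eS \ cS) ω = 0 := by simp [hχ, Set.indicator_apply, he]
      simp [hχ0]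
  rw [E5', E4', E3', E2', e1, e2, e3, e4, e5, hsplit (-1) (by norm_num), hsplit 1 (by norm_num)]
  linarith [hnn, G1, G2, G3 (-1) (by norm_num), G3 1 (by norm_num)]


/-- The σ-algebra generated by all coins except `ξ n` and `η s`. -/
def coinAlg {Ω' : Type*} [MeasurableSpace Ω'] (ξ η : ℕ → Ω' → ℤ) (n s : ℕ) :
    MeasurableSpace Ω' :=
  ⨆ i ∈ (({Sum.inl n, Sum.inr s} : Set (ℕ ⊕ ℕ))ᶜ),
    MeasurableSpace.comap (Sum.elim ξ η i) inferInstance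

lemma coinAlg_le {Ω' : Type*} {mΩ : MeasurableSpace Ω'} (ξ η : ℕ → Ω' → ℤ)
    (hξm : ∀ i, Measurable[mΩ] (ξ i)) (hηm : ∀ i, Measurable[mΩ] (η i)) (n s : ℕ) :
    coinAlg ξ η n s ≤ mΩ := by
  apply iSup_le
  intro i
  apply iSup_le
  intro _
  cases i with
  | inl a => exact measurable_iff_comap_le.1 (hξm a)
  | inr a => exact measurable_iff_comap_le.1 (hηm a)

lemma coinAlg_coin_meas {Ω' : Type*} [MeasurableSpace Ω'] (ξ η : ℕ → Ω' → ℤ) (n s : ℕ)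
    (i : ℕ ⊕ ℕ) (hi : i ∈ (({Sum.inl n, Sum.inr s} : Set (ℕ ⊕ ℕ))ᶜ)) :
    Measurable[coinAlg ξ η n s] (Sum.elim ξ η i) :=
  measurable_iff_comap_le.2
    (le_biSup (fun i => MeasurableSpace.comap (Sum.elim ξ η i) inferInstance) hi)

lemma coinAlg_indep {Ω' : Type*} {mΩ : MeasurableSpace Ω'} (P : Measure Ω')
    [IsProbabilityMeasure P] (ξ η : ℕ → Ω' → ℤ)
    (hξm : ∀ i, Measurable[mΩ] (ξ i)) (hηm : ∀ i, Measurable[mΩ] (η i))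
    (hiind : iIndepFun (Sum.elim ξ η) P)
    (n s : ℕ) (k : ℕ ⊕ ℕ) (hk : k ∈ ({Sum.inl n, Sum.inr s} : Set (ℕ ⊕ ℕ))) :
    Indep (coinAlg ξ η n s) (MeasurableSpace.comap (Sum.elim ξ η k) inferInstance) P := by
  have h_le : ∀ i : ℕ ⊕ ℕ, MeasurableSpace.comap (Sum.elim ξ η i)
      (inferInstance : MeasurableSpace ℤ) ≤ mΩ := by
    intro i
    cases i with
    | inl a => exact measurable_iff_comap_le.1 (hξm a)
    | inr a => exact measurable_iff_comap_le.1 (hηm a)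
  have hiI : iIndep (fun i : ℕ ⊕ ℕ =>
      MeasurableSpace.comap (Sum.elim ξ η i) (inferInstance : MeasurableSpace ℤ)) P := hiind
  have hbig := indep_biSup_compl h_le hiI (({Sum.inl n, Sum.inr s} : Set (ℕ ⊕ ℕ))ᶜ)
  rw [compl_compl] at hbig
  exact indep_of_indep_of_le_right hbig
    (le_biSup (fun i => MeasurableSpace.comap (Sum.elim ξ η i) inferInstance) hk)

/-- for every `{0,…,T}`-valued stopping time `σ` of the natural filtration of
`X` (with `X_0 ∼ λ`) and every `{0,…,T}`-valued stopping time `τ` of the natural filtration of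
`Y` (with `Y_0 = y`), the function `s ↦ F^τ_σ(s) = E^λ_y[|X_{σ ∧ (T − τ∧s)} − Y_{τ∧s}|]` is
nondecreasing on `{0, …, T}`. -/
theorem general_interpolating_function_monotone
    (P : Measure Ω) [IsProbabilityMeasure P] (ξ η : ℕ → Ω → ℤ)
    (h : IndepSSRWIncrements P ξ η)
    (lam : Measure ℤ) [IsProbabilityMeasure lam] (hlam : FiniteFirstMoment lam)
    (T : ℕ) (y : ℤ)
    (σ : ℤ × Ω → ℕ) (hσ : IsNatStopping (fun i (p : ℤ × Ω) => walk ξ p.1 i p.2) σ)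
    (hσT : ∀ p, σ p ≤ T)
    (τ : Ω → ℕ) (hτ : IsNatStopping (walk η y) τ) (hτT : ∀ ω, τ ω ≤ T)
    (F : ℕ → ℝ)
    (hF : ∀ s, F s = ∫ p : ℤ × Ω,
      ((|walk ξ p.1 (min (σ p) (T - min (τ p.2) s)) p.2
        - walk η y (min (τ p.2) s) p.2| : ℤ) : ℝ) ∂(lam.prod P)) :
    ∀ s₁ s₂, s₁ ≤ s₂ → s₂ ≤ T → F s₁ ≤ F s₂ := by
  obtain ⟨hξm, hηm, hξf, hηf, hiind⟩ := h
  -- measurability of the walks on the product space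
  have hwX : ∀ t : ℕ, Measurable (fun p : ℤ × Ω => walk ξ p.1 t p.2) := by
    intro t
    exact measurable_fst.add
      (Finset.measurable_sum _ fun i _ => (hξm i).comp measurable_snd)
  have hwY : ∀ t : ℕ, Measurable (fun ω : Ω => walk η y t ω) := by
    intro t
    exact measurable_const.add (Finset.measurable_sum _ fun i _ => hηm i)
  -- measurability of σ and τ
  have hσle : ∀ k, MeasurableSet {p : ℤ × Ω | σ p ≤ k} := by
    intro k
    obtain ⟨B, hB, hpre⟩ := hσ k
    rw [← hpre]
    have hm : Measurable (fun p : ℤ × Ω => (fun i : Fin (k + 1) => walk ξ p.1 i p.2)) :=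
      measurable_pi_lambda _ (fun i => hwX i)
    exact hm hB
  have hτle : ∀ k, MeasurableSet {ω : Ω | τ ω ≤ k} := by
    intro k
    obtain ⟨B, hB, hpre⟩ := hτ k
    rw [← hpre]
    have hm : Measurable (fun ω : Ω => (fun i : Fin (k + 1) => walk η y i ω)) :=
      measurable_pi_lambda _ (fun i => hwY i)
    exact hm hB
  have hσm : Measurable σ := by
    apply measurable_to_countable'
    intro k
    match k with
    | 0 =>
      have : σ ⁻¹' {0} = {p : ℤ × Ω | σ p ≤ 0} := by ext p; simp [Nat.le_zero]
      rw [this]; exact hσle 0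
    | (k + 1) =>
      have : σ ⁻¹' {k + 1} = {p : ℤ × Ω | σ p ≤ k + 1} \ {p : ℤ × Ω | σ p ≤ k} := by
        ext p; simp [Set.mem_diff]; omega
      rw [this]; exact (hσle (k + 1)).diff (hσle k)
  have hτm : Measurable τ := by
    apply measurable_to_countable'
    intro k
    match k with
    | 0 =>
      have : τ ⁻¹' {0} = {ω : Ω | τ ω ≤ 0} := by ext ω; simp [Nat.le_zero]
      rw [this]; exact hτle 0
    | (k + 1) =>
      have : τ ⁻¹' {k + 1} = {ω : Ω | τ ω ≤ k + 1} \ {ω : Ω | τ ω ≤ k} := by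
        ext ω; simp [Set.mem_diff]; omega
      rw [this]; exact (hτle (k + 1)).diff (hτle k)
  -- the integrand
  set g : ℕ → ℤ × Ω → ℝ := fun s p =>
    ((|walk ξ p.1 (min (σ p) (T - min (τ p.2) s)) p.2
      - walk η y (min (τ p.2) s) p.2| : ℤ) : ℝ) with hg
  -- finite-sum representation of the integrand
  have hg_repr : ∀ s p, g s p = ∑ j ∈ Finset.range (T + 1),
      (if min (τ p.2) s = j then
        (∑ i ∈ Finset.range (T + 1), if min (σ p) (T - j) = i then
          ((|walk ξ p.1 i p.2 - walk η y j p.2| : ℤ) : ℝ) else 0) else 0) := by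
    intro s p
    rw [Finset.sum_ite_eq (Finset.range (T + 1)) (min (τ p.2) s),
      if_pos (Finset.mem_range.2 (by have := hτT p.2; omega)),
      Finset.sum_ite_eq (Finset.range (T + 1)) (min (σ p) (T - min (τ p.2) s)),
      if_pos (Finset.mem_range.2 (by have := hσT p; omega))]
  have hgm : ∀ s, Measurable (g s) := by
    intro s
    have : g s = fun p => ∑ j ∈ Finset.range (T + 1),
        (if min (τ p.2) s = j then
          (∑ i ∈ Finset.range (T + 1), if min (σ p) (T - j) = i then
            ((|walk ξ p.1 i p.2 - walk η y j p.2| : ℤ) : ℝ) else 0) else 0) := by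
      funext p; exact hg_repr s p
    rw [this]
    apply Finset.measurable_sum
    intro j _
    apply Measurable.ite
    · exact ((Measurable.of_discrete (f := fun t : ℕ => min t s)).comp
        (hτm.comp measurable_snd)) (measurableSet_singleton j)
    · apply Finset.measurable_sum
      intro i _
      apply Measurable.ite
      · exact ((Measurable.of_discrete (f := fun t : ℕ => min t (T - j))).comp hσm)
          (measurableSet_singleton i)
      · exact (Measurable.of_discrete (f := fun z : ℤ => ((|z| : ℤ) : ℝ))).comp
          ((hwX i).sub ((hwY j).comp measurable_snd))
      · exact measurable_const
    · exact measurable_const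
  -- a.e. coin bounds
  have hcoin : ∀ᵐ ω ∂P, ∀ i : ℕ, |ξ i ω| ≤ 1 ∧ |η i ω| ≤ 1 := by
    rw [ae_all_iff]
    intro i
    filter_upwards [ae_sign P (ξ i) (hξm i) (hξf i), ae_sign P (η i) (hηm i) (hηf i)]
      with ω h1 h2
    constructor
    · rcases h1 with h | h <;> simp [h]
    · rcases h2 with h | h <;> simp [h]
  set Ecoin : Set Ω := {ω | ∀ i : ℕ, |ξ i ω| ≤ 1 ∧ |η i ω| ≤ 1} with hEcoin
  have hEcm : MeasurableSet Ecoin := by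
    have : Ecoin = ⋂ i : ℕ, ((ξ i) ⁻¹' {z : ℤ | |z| ≤ 1} ∩ (η i) ⁻¹' {z : ℤ | |z| ≤ 1}) := by
      ext ω; simp [hEcoin, Set.mem_iInter]
    rw [this]
    exact MeasurableSet.iInter fun i =>
      ((hξm i) MeasurableSet.of_discrete).inter ((hηm i) MeasurableSet.of_discrete)
  have hEc1 : P Ecoinᶜ = 0 := by
    rw [ae_iff] at hcoin
    convert hcoin using 2
    rfl
  have hprod_ae : ∀ᵐ p ∂(lam.prod P), p.2 ∈ Ecoin := by
    rw [ae_iff]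
    have hset : {p : ℤ × Ω | ¬ p.2 ∈ Ecoin} = Prod.snd ⁻¹' Ecoinᶜ := rfl
    rw [hset, ← Measure.map_apply measurable_snd hEcm.compl, Measure.map_snd_prod]
    simp [hEc1]
  -- a.e. bound for the integrand
  have hgbd : ∀ s, ∀ᵐ p ∂(lam.prod P), |g s p| ≤ ((|p.1| + |y| + 2 * T : ℤ) : ℝ) := by
    intro s
    filter_upwards [hprod_ae] with p hp
    have hbX : ∀ j, j < T → |ξ j p.2| ≤ 1 := fun j _ => (hp j).1
    have hbY : ∀ j, j < T → |η j p.2| ≤ 1 := fun j _ => (hp j).2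
    have h1 : |walk ξ p.1 (min (σ p) (T - min (τ p.2) s)) p.2| ≤ |p.1| + T := by
      have hle : (min (σ p) (T - min (τ p.2) s) : ℤ) ≤ (T : ℤ) := by
        have := hσT p; push_cast; omega
      have := walk_abs_le' ξ p.1 (min (σ p) (T - min (τ p.2) s)) p.2
        (fun j hj => (hp j).1)
      omega
    have h2 : |walk η y (min (τ p.2) s) p.2| ≤ |y| + T := by
      have hle : ((min (τ p.2) s : ℕ) : ℤ) ≤ (T : ℤ) := by
        have := hτT p.2; push_cast; omega
      have := walk_abs_le' η y (min (τ p.2) s) p.2 (fun j hj => (hp j).2)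
      omega
    have h3 : |walk ξ p.1 (min (σ p) (T - min (τ p.2) s)) p.2
        - walk η y (min (τ p.2) s) p.2| ≤ |p.1| + |y| + 2 * T := by
      have := abs_sub (walk ξ p.1 (min (σ p) (T - min (τ p.2) s)) p.2)
        (walk η y (min (τ p.2) s) p.2)
      omega
    have h4 : |g s p| = ((|walk ξ p.1 (min (σ p) (T - min (τ p.2) s)) p.2
        - walk η y (min (τ p.2) s) p.2| : ℤ) : ℝ) := by
      rw [hg]; rw [abs_of_nonneg (by positivity)]
    rw [h4]
    exact_mod_cast h3
  -- integrability of the bound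
  have hbint : Integrable (fun p : ℤ × Ω => ((|p.1| + |y| + 2 * T : ℤ) : ℝ)) (lam.prod P) := by
    have h1 : Integrable (fun z : ℤ => ((|z| : ℤ) : ℝ)) lam := by
      have : (fun z : ℤ => ((|z| : ℤ) : ℝ)) = fun z : ℤ => |(z : ℝ)| := by
        funext z; rw [Int.cast_abs]
      rw [this]
      exact hlam.abs
    have h2 : Integrable (fun z : ℤ => ((|z| : ℤ) : ℝ)) (Measure.map Prod.fst (lam.prod P)) := by
      rw [Measure.map_fst_prod]
      simpa using h1
    have h3 : Integrable (fun p : ℤ × Ω => ((|p.1| : ℤ) : ℝ)) (lam.prod P) :=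
      h2.comp_measurable measurable_fst
    have h4 := h3.add (integrable_const (μ := lam.prod P) (((|y| + 2 * T : ℤ)) : ℝ))
    have : (fun p : ℤ × Ω => ((|p.1| + |y| + 2 * T : ℤ) : ℝ))
        = fun p : ℤ × Ω => ((|p.1| : ℤ) : ℝ) + ((|y| + 2 * T : ℤ) : ℝ) := by
      funext p; push_cast; ring
    rw [this]
    exact h4
  have hgint : ∀ s, Integrable (g s) (lam.prod P) := by
    intro s
    exact Integrable.mono' hbint (hgm s).aestronglyMeasurable (hgbd s)
  -- the single monotone step
  have hstep : ∀ s, s + 1 ≤ T → F s ≤ F (s + 1) := by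
    intro s hsT
    have hF1 : F s = ∫ p, g s p ∂(lam.prod P) := hF s
    have hF2 : F (s + 1) = ∫ p, g (s + 1) p ∂(lam.prod P) := hF (s + 1)
    rw [hF1, hF2, ← sub_nonneg, ← integral_sub (hgint (s + 1)) (hgint s)]
    have hIone : Integrable (fun p : ℤ × Ω => g (s + 1) p - g s p) (lam.prod P) :=
      (hgint (s + 1)).sub (hgint s)
    have hx : ∀ x : ℤ, 0 ≤ ∫ ω, (g (s + 1) (x, ω) - g s (x, ω)) ∂P := by
      intro x
      set n : ℕ := T - (s + 1) with hn
      have hnT : n + 1 = T - s := by omega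
      -- independence facts
      have hIu : Indep (coinAlg ξ η n s)
          (MeasurableSpace.comap (ξ n) (inferInstance : MeasurableSpace ℤ)) P :=
        coinAlg_indep P ξ η hξm hηm hiind n s (Sum.inl n) (by simp)
      have hIv : Indep (coinAlg ξ η n s)
          (MeasurableSpace.comap (η s) (inferInstance : MeasurableSpace ℤ)) P :=
        coinAlg_indep P ξ η hξm hηm hiind n s (Sum.inr s) (by simp)
      -- measurability with respect to the coin algebra
      have hcmX : ∀ i, i < n → Measurable[coinAlg ξ η n s] (ξ i) := by
        intro i hi
        exact coinAlg_coin_meas ξ η n s (Sum.inl i) (by simp; omega)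
      have hcmY : ∀ j, j < s → Measurable[coinAlg ξ η n s] (η j) := by
        intro j hj
        exact coinAlg_coin_meas ξ η n s (Sum.inr j) (by simp; omega)
      have hwXM : ∀ t, t ≤ n → Measurable[coinAlg ξ η n s] (fun ω => walk ξ x t ω) := by
        intro t ht
        exact measurable_const.add (Finset.measurable_sum _ fun i hi =>
          hcmX i (by have := Finset.mem_range.1 hi; omega))
      have hwYM : ∀ t, t ≤ s → Measurable[coinAlg ξ η n s] (fun ω => walk η y t ω) := by
        intro t ht
        exact measurable_const.add (Finset.measurable_sum _ fun i hi =>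
          hcmY i (by have := Finset.mem_range.1 hi; omega))
      have hσM : ∀ k, k ≤ n → MeasurableSet[coinAlg ξ η n s] {ω : Ω | σ (x, ω) ≤ k} := by
        intro k hk
        obtain ⟨B, hB, hpre⟩ := hσ k
        have hfm : Measurable[coinAlg ξ η n s]
            (fun ω : Ω => (fun i : Fin (k + 1) => walk ξ x i ω)) :=
          @measurable_pi_lambda Ω (Fin (k + 1)) (fun _ => ℤ) (coinAlg ξ η n s)
            (fun _ => inferInstance) _ (fun i => hwXM i (by have := i.2; omega))
        have hset : {ω : Ω | σ (x, ω) ≤ k}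
            = (fun ω : Ω => (fun i : Fin (k + 1) => walk ξ x i ω)) ⁻¹' B := by
          ext ω
          have h := Set.ext_iff.1 hpre (x, ω)
          simp only [Set.mem_preimage, Set.mem_setOf_eq] at h ⊢
          exact h.symm
        rw [hset]
        exact hfm hB
      have hτM : MeasurableSet[coinAlg ξ η n s] {ω : Ω | τ ω ≤ s} := by
        obtain ⟨B, hB, hpre⟩ := hτ s
        have hfm : Measurable[coinAlg ξ η n s]
            (fun ω : Ω => (fun i : Fin (s + 1) => walk η y i ω)) :=
          @measurable_pi_lambda Ω (Fin (s + 1)) (fun _ => ℤ) (coinAlg ξ η n s)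
            (fun _ => inferInstance) _ (fun i => hwYM i (by have := i.2; omega))
        have hset : {ω : Ω | τ ω ≤ s}
            = (fun ω : Ω => (fun i : Fin (s + 1) => walk η y i ω)) ⁻¹' B := by
          ext ω
          have h := Set.ext_iff.1 hpre ω
          simp only [Set.mem_preimage, Set.mem_setOf_eq] at h ⊢
          exact h.symm
        rw [hset]
        exact hfm hB
      -- the `frozen` part of the increment
      set a : Ω → ℤ := fun ω => walk ξ x (min (σ (x, ω)) n) ω - walk η y s ω with ha
      have ham : Measurable[coinAlg ξ η n s] a := by
        have haeq : a = fun ω =>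
            (x + ∑ i ∈ Finset.range n, if i < σ (x, ω) then ξ i ω else 0)
              - walk η y s ω := by
          funext ω
          rw [ha]
          simp only
          rw [walk_min']
        rw [haeq]
        apply Measurable.sub
        · apply Measurable.add measurable_const
          apply Finset.measurable_sum
          intro i hi
          have hi' : i < n := Finset.mem_range.1 hi
          have hseteq : {ω : Ω | i < σ (x, ω)} = {ω : Ω | σ (x, ω) ≤ i}ᶜ := by
            ext ω; simp [not_le]
          have hms : MeasurableSet[coinAlg ξ η n s] {ω : Ω | i < σ (x, ω)} := by
            rw [hseteq]; exact (hσM i (by omega)).compl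
          exact Measurable.ite hms (hcmX i hi') measurable_const
        · exact hwYM s le_rfl
      -- the eS and cS sets
      have heM : MeasurableSet[coinAlg ξ η n s] {ω : Ω | s < τ ω} := by
        have hseteq : {ω : Ω | s < τ ω} = {ω : Ω | τ ω ≤ s}ᶜ := by
          ext ω; simp [not_le]
        rw [hseteq]; exact hτM.compl
      have hcM : MeasurableSet[coinAlg ξ η n s] {ω : Ω | n < σ (x, ω)} := by
        have hseteq : {ω : Ω | n < σ (x, ω)} = {ω : Ω | σ (x, ω) ≤ n}ᶜ := by
          ext ω; simp [not_le]
        rw [hseteq]; exact (hσM n le_rfl).compl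
      -- the bound
      have hab : ∀ᵐ ω ∂P, ((|a ω| : ℤ) : ℝ) ≤ ((|x| + |y| + 2 * T : ℤ) : ℝ) := by
        filter_upwards [hcoin] with ω hp
        have h1 := walk_abs_le' ξ x (min (σ (x, ω)) n) ω (fun j _ => (hp j).1)
        have h2 := walk_abs_le' η y s ω (fun j _ => (hp j).2)
        have hc1 : ((min (σ (x, ω)) n : ℕ) : ℤ) ≤ (T : ℤ) := by
          have : min (σ (x, ω)) n ≤ T := by
            have := hσT (x, ω); omega
          exact_mod_cast this
        have hc2 : ((s : ℕ) : ℤ) ≤ (T : ℤ) := by exact_mod_cast (by omega : s ≤ T)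
        have h3 : |a ω| ≤ |x| + |y| + 2 * T := by
          rw [ha]
          simp only
          have := abs_sub (walk ξ x (min (σ (x, ω)) n) ω) (walk η y s ω)
          omega
        exact_mod_cast h3
      -- pointwise identification of the difference of the integrands
      have hpt : (fun ω => g (s + 1) (x, ω) - g s (x, ω))
          = fun ω => ({ω' : Ω | s < τ ω'}).indicator
              (fun ω' => ((|a ω' - η s ω'| : ℤ) : ℝ)
                - ((|a ω' + ({ω' : Ω | n < σ (x, ω')}).indicator (ξ n) ω'| : ℤ) : ℝ)) ω := by
        funext ω
        have e1 : g (s + 1) (x, ω) = ((|walk ξ x (min (σ (x, ω)) (T - min (τ ω) (s + 1))) ω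
            - walk η y (min (τ ω) (s + 1)) ω| : ℤ) : ℝ) := rfl
        have e0 : g s (x, ω) = ((|walk ξ x (min (σ (x, ω)) (T - min (τ ω) s)) ω
            - walk η y (min (τ ω) s) ω| : ℤ) : ℝ) := rfl
        by_cases hτs : τ ω ≤ s
        · rw [Set.indicator_of_notMem (by simp only [Set.mem_setOf_eq]; omega)]
          rw [e1, e0, min_eq_left hτs, min_eq_left (by omega : τ ω ≤ s + 1)]
          exact sub_self _
        · rw [Set.indicator_of_mem (show ω ∈ {ω' : Ω | s < τ ω'} by
            simp only [Set.mem_setOf_eq]; omega)]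
          rw [e1, e0, min_eq_right (by omega : s ≤ τ ω),
            min_eq_right (by omega : s + 1 ≤ τ ω)]
          have hT1 : T - (s + 1) = n := by omega
          have hT0 : T - s = n + 1 := by omega
          rw [hT1, hT0, walk_min_succ' ξ x (σ (x, ω)) n ω, walk_succ' η y s ω]
          have hv1 : walk ξ x (min (σ (x, ω)) n) ω - (walk η y s ω + η s ω)
              = a ω - η s ω := by rw [ha]; ring
          have hv2 : walk ξ x (min (σ (x, ω)) n) ω + (if n < σ (x, ω) then ξ n ω else 0)
              - walk η y s ω
              = a ω + ({ω' : Ω | n < σ (x, ω')}).indicator (ξ n) ω := by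
            rw [ha, Set.indicator_apply]
            simp only [Set.mem_setOf_eq]
            ring
          rw [hv1, hv2]
      rw [hpt]
      exact key_nonneg P ⟨coinAlg ξ η n s, coinAlg_le ξ η hξm hηm n s⟩ (ξ n) (η s)
        (hξm n) (hηm s) (hξf n) (hηf s) hIu hIv a ham ((|x| + |y| + 2 * T : ℤ) : ℝ) hab
        {ω' : Ω | s < τ ω'} {ω' : Ω | n < σ (x, ω')} heM hcM
    calc (0 : ℝ) ≤ ∫ x, ∫ ω, (g (s + 1) (x, ω) - g s (x, ω)) ∂P ∂lam :=
          integral_nonneg hx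
      _ = ∫ p, (g (s + 1) p - g s p) ∂(lam.prod P) := (integral_prod _ hIone).symm
  -- conclude by induction
  intro s₁ s₂ h12 h2T
  induction s₂ with
  | zero =>
    have : s₁ = 0 := Nat.le_zero.1 h12
    rw [this]
  | succ m ih =>
    rcases Nat.lt_or_ge s₁ (m + 1) with hlt | hge
    · have h1 : s₁ ≤ m := by omega
      have h2 : m ≤ T := by omega
      exact le_trans (ih h1 h2) (hstep m h2T)
    · have : s₁ = m + 1 := by omega
      rw [this]


end SwitchingIdentities
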